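/- There are no two distinct positive integers n and m such that a(n) - 2^n = a(m) - 2^m. -/

import Mathlib

/-- The sequence `a` defined by `a 0 = 1`, `a 1 = -1`,
`a n = -3 * a (n-1) - 4 * a (n-2)` for `n ≥ 2`. -/
def a : ℕ → ℤ
  | 0 => 1
  | 1 => -1
  | n + 2 => -3 * a (n + 1) - 4 * a n

lemma a_rec (n : ℕ) : a (n + 2) = -3 * a (n + 1) - 4 * a n := rfl

lemma a_odd_pair : ∀ n : ℕ, Odd (a n) ∧ Odd (a (n + 1))
  | 0 => ⟨⟨0, by norm_num [a]⟩, ⟨-1, by norm_num [a]⟩⟩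
  | n + 1 => by
      obtain ⟨⟨c, hc⟩, ⟨d, hd⟩⟩ := a_odd_pair n
      refine ⟨⟨d, hd⟩, ⟨-3 * d - 4 * c - 4, ?_⟩⟩
      rw [a_rec, hc, hd]; ring

lemma a_odd (n : ℕ) : Odd (a n) := (a_odd_pair n).1

/-- The key quadratic-form invariant. -/
lemma quad : ∀ n : ℕ, (2 * a (n + 1) + 3 * a n) ^ 2 + 7 * (a n) ^ 2 = 2 ^ (2 * n + 3)
  | 0 => by norm_num [a]
  | n + 1 => by
      have ih := quad n
      rw [a_rec]
      have h2 : (2 : ℤ) ^ (2 * (n + 1) + 3) = 4 * 2 ^ (2 * n + 3) := by ring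
      rw [h2, ← ih]; ring

lemma rep_bound (P b X : ℤ) (hq : X ^ 2 + 7 * (P + b) ^ 2 = 8 * P ^ 2) (hb : b ≠ 0) :
    2 * P ≤ 71 * b ^ 2 := by
  have key : (P - 7 * b - X) * (P - 7 * b + X) = 56 * b ^ 2 := by linear_combination -hq
  have hb1 : 1 ≤ |b| := Int.one_le_abs hb
  have hbsq : 1 ≤ b ^ 2 := by nlinarith [sq_abs b]
  have habs : |b| ≤ b ^ 2 := by nlinarith [sq_abs b]
  have hsne : P - 7 * b - X ≠ 0 := by intro h0; rw [h0, zero_mul] at key; nlinarith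
  have htne : P - 7 * b + X ≠ 0 := by intro h0; rw [h0, mul_zero] at key; nlinarith
  have hs1 : 1 ≤ |P - 7 * b - X| := Int.one_le_abs hsne
  have ht1 : 1 ≤ |P - 7 * b + X| := Int.one_le_abs htne
  have hprod : |P - 7 * b - X| * |P - 7 * b + X| = 56 * b ^ 2 := by
    rw [← abs_mul, key, abs_of_nonneg (by positivity)]
  have hsum : (P - 7 * b - X) + (P - 7 * b + X) ≤ |P - 7 * b - X| + |P - 7 * b + X| :=
    add_le_add (le_abs_self _) (le_abs_self _)
  nlinarith [hsum, hprod, hs1, ht1, hb1, habs, hbsq, le_abs_self b, neg_abs_le b,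
    mul_nonneg (by linarith : (0:ℤ) ≤ |P - 7 * b - X| - 1) (by linarith : (0:ℤ) ≤ |P - 7 * b + X| - 1)]

lemma bound2 (A P : ℤ) (hP : 0 < P) (h7 : 7 * A ^ 2 ≤ 8 * P ^ 2) : (A - P) ^ 2 ≤ 9 * P ^ 2 := by
  nlinarith [sq_nonneg (A + 2 * P)]

/-- Size bound forcing `m ≤ 2n + 8`. -/
lemma size_bound (n m : ℕ) (hn : 1 ≤ n) (hnm : n < m)
    (h : a n - 2 ^ n = a m - 2 ^ m) : m ≤ 2 * n + 8 := by
  have hab : a m = 2 ^ m + (a n - 2 ^ n) := by linarith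
  have hq := quad m
  rw [hab] at hq
  have hq' : (2 * a (m + 1) + 3 * (2 ^ m + (a n - 2 ^ n))) ^ 2
      + 7 * ((2 : ℤ) ^ m + (a n - 2 ^ n)) ^ 2 = 8 * ((2 : ℤ) ^ m) ^ 2 := by
    linear_combination hq
  have hbne : (a n - 2 ^ n) ≠ 0 := by
    have h1 : a n % 2 = 1 := Int.odd_iff.mp (a_odd n)
    have h2 : (2 : ℤ) ∣ 2 ^ n := dvd_pow_self 2 (by omega)
    obtain ⟨k, hk⟩ := h2
    intro h0
    omega
  have hmain := rep_bound ((2 : ℤ) ^ m) (a n - 2 ^ n)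
    (2 * a (m + 1) + 3 * (2 ^ m + (a n - 2 ^ n))) hq' hbne
  have h7 : 7 * (a n) ^ 2 ≤ 8 * ((2 : ℤ) ^ n) ^ 2 := by
    have hq2 := quad n
    have hc : (2 : ℤ) ^ (2 * n + 3) = 8 * ((2 : ℤ) ^ n) ^ 2 := by ring
    rw [hc] at hq2
    nlinarith [sq_nonneg (2 * a (n + 1) + 3 * a n)]
  have hb9 := bound2 (a n) ((2 : ℤ) ^ n) (by positivity) h7
  have hfin : (2 : ℤ) ^ (m + 1) < 2 ^ (2 * n + 10) := by
    have e1 : (2 : ℤ) ^ (m + 1) = 2 * 2 ^ m := by ring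
    have e2 : (2 : ℤ) ^ (2 * n + 10) = 1024 * ((2 : ℤ) ^ n) ^ 2 := by ring
    have hPpos : (0 : ℤ) < 2 ^ n := by positivity
    rw [e1, e2]
    nlinarith [hmain, hb9, hPpos]
  have : m + 1 < 2 * n + 10 := by
    by_contra hc
    push_neg at hc
    exact absurd (pow_le_pow_right₀ (by norm_num : (1 : ℤ) ≤ 2) hc) (not_le.mpr hfin)
  omega

/-- Hensel lifting: approximate roots of `x² + 3x + 4` modulo powers of 2. -/
lemma hensel : ∀ K : ℕ, 4 ≤ K → ∃ x : ℤ, x % 16 = 9 ∧ (2 : ℤ) ^ K ∣ x ^ 2 + 3 * x + 4 := by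
  intro K hK
  induction K, hK using Nat.le_induction with
  | base => exact ⟨9, by norm_num, by norm_num⟩
  | succ K hK ih =>
      obtain ⟨x, hx16, hxd⟩ := ih
      obtain ⟨y, hy⟩ := hxd
      by_cases h2y : (2 : ℤ) ∣ y
      · obtain ⟨z, hz⟩ := h2y
        exact ⟨x, hx16, ⟨z, by rw [hy, hz, pow_succ]; ring⟩⟩
      · refine ⟨x + 2 ^ K, ?_, ?_⟩
        · have h16 : (16 : ℤ) ∣ 2 ^ K := by
            have : (2 : ℤ) ^ K = 16 * 2 ^ (K - 4) := by
              rw [show (16 : ℤ) = 2 ^ 4 by norm_num, ← pow_add]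
              congr 1; omega
            exact ⟨2 ^ (K - 4), this⟩
          obtain ⟨w, hw⟩ := h16
          omega
        · have hyodd : y % 2 = 1 := by
            rcases Int.emod_two_eq y with h | h
            · exact absurd (Int.dvd_of_emod_eq_zero h) h2y
            · exact h
          have hKe : (2 : ℤ) ∣ 2 ^ K := dvd_pow_self 2 (by omega)
          obtain ⟨u, hu⟩ := hKe
          have hexp : (x + 2 ^ K) ^ 2 + 3 * (x + 2 ^ K) + 4
              = 2 ^ K * (y + 2 * x + 3 + 2 ^ K) := by
            linear_combination hy
          have heven : (2 : ℤ) ∣ (y + 2 * x + 3 + 2 ^ K) := by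
            rw [hu]; omega
          obtain ⟨v, hv⟩ := heven
          exact ⟨v, by rw [hexp, hv, pow_succ]; ring⟩

/-- The eigen-congruence: `(2x+3)·a k ≡ x^k(x+2) - (-3-x)^k(-1-x)` mod `2^K`. -/
lemma eig (K : ℕ) (x : ℤ) (hx : (2 : ℤ) ^ K ∣ x ^ 2 + 3 * x + 4) :
    ∀ k : ℕ, (2 : ℤ) ^ K ∣ (2 * x + 3) * a k - (x ^ k * (x + 2) - (-3 - x) ^ k * (-1 - x))
  | 0 => by
      have : (2 * x + 3) * a 0 - (x ^ 0 * (x + 2) - (-3 - x) ^ 0 * (-1 - x)) = 0 := by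
        norm_num [a]; ring
      rw [this]
      exact dvd_zero _
  | 1 => by
      have : (2 * x + 3) * a 1 - (x ^ 1 * (x + 2) - (-3 - x) ^ 1 * (-1 - x)) = 0 := by
        norm_num [a]; ring
      rw [this]
      exact dvd_zero _
  | (k + 2) => by
      have h1 := eig K x hx (k + 1)
      have h2 := eig K x hx k
      have key : (2 * x + 3) * a (k + 2) - (x ^ (k + 2) * (x + 2) - (-3 - x) ^ (k + 2) * (-1 - x))
          = -3 * ((2 * x + 3) * a (k + 1) - (x ^ (k + 1) * (x + 2) - (-3 - x) ^ (k + 1) * (-1 - x)))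
            - 4 * ((2 * x + 3) * a k - (x ^ k * (x + 2) - (-3 - x) ^ k * (-1 - x)))
            - (x ^ 2 + 3 * x + 4) * (x ^ k * (x + 2) - (-3 - x) ^ k * (-1 - x)) := by
        rw [a_rec]; ring
      rw [key]
      exact ((h1.mul_left _).sub (h2.mul_left _)).sub (hx.mul_right _)

/-- Odd powers of something `≡ 9 mod 16` stay `≡ 9 mod 16`. -/
lemma pow_odd_mod16 (x : ℤ) (hx : x % 16 = 9) (t : ℕ) : x ^ (2 * t + 1) % 16 = 9 := by
  have h9 : x ≡ 9 [ZMOD 16] := by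
    unfold Int.ModEq; omega
  have hp : x ^ (2 * t + 1) ≡ 9 ^ (2 * t + 1) [ZMOD 16] := h9.pow _
  have h81 : (9 : ℤ) ^ (2 * t + 1) ≡ 9 [ZMOD 16] := by
    have : (9 : ℤ) ^ (2 * t + 1) = 81 ^ t * 9 := by
      rw [show (81 : ℤ) = 9 ^ 2 by norm_num, ← pow_mul]; ring
    rw [this]
    calc (81 : ℤ) ^ t * 9 ≡ 1 ^ t * 9 [ZMOD 16] :=
          (Int.ModEq.pow t (by decide)).mul_right 9
      _ = 9 := by ring
  have := hp.trans h81
  unfold Int.ModEq at this; omega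

/-- LTE-style: exact 2-valuation under repeated squaring. -/
lemma sq_tower : ∀ (j : ℕ) (y : ℤ), (∃ c : ℤ, Odd c ∧ y = 8 * c + 1) →
    ∃ c : ℤ, Odd c ∧ y ^ (2 ^ j) = 2 ^ (3 + j) * c + 1
  | 0, y, ⟨c, hc, hy⟩ => ⟨c, hc, by norm_num [hy]⟩
  | (j + 1), y, h => by
      obtain ⟨c, hc, hy⟩ := sq_tower j y h
      refine ⟨2 ^ (2 + j) * c ^ 2 + c, ?_, ?_⟩
      · have he : Even ((2 : ℤ) ^ (2 + j) * c ^ 2) :=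
          ⟨2 ^ (1 + j) * c ^ 2, by ring⟩
        exact he.add_odd hc
      · have : y ^ (2 ^ (j + 1)) = (y ^ (2 ^ j)) ^ 2 := by
          rw [pow_succ, pow_mul]
        rw [this, hy]; ring

/-- `x ≡ 9 mod 16` implies `x^d - 1 = 2^(3+j) · odd` where `d = 2^j · odd`. -/
lemma val_pow_sub_one (x : ℤ) (hx : x % 16 = 9) (j d' : ℕ) (hd' : Odd d') :
    ∃ c : ℤ, Odd c ∧ x ^ (d' * 2 ^ j) = 2 ^ (3 + j) * c + 1 := by
  obtain ⟨t, rfl⟩ := hd'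
  have h9 : x ^ (2 * t + 1) % 16 = 9 := pow_odd_mod16 x hx t
  have h16 : (16 : ℤ) ∣ x ^ (2 * t + 1) - 9 := by omega
  obtain ⟨q, hq⟩ := h16
  have hbase : ∃ c : ℤ, Odd c ∧ x ^ (2 * t + 1) = 8 * c + 1 :=
    ⟨2 * q + 1, ⟨q, by ring⟩, by omega⟩
  obtain ⟨c, hc, htow⟩ := sq_tower j (x ^ (2 * t + 1)) hbase
  refine ⟨c, hc, ?_⟩
  rw [pow_mul]
  exact htow

lemma pow_dvd_le (N M : ℕ) (c : ℤ) (hc : Odd c) (h : (2 : ℤ) ^ N ∣ 2 ^ M * c) : N ≤ M := by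
  by_contra hlt
  push_neg at hlt
  have h2 : (2 : ℤ) ^ (M + 1) ∣ 2 ^ M * c := dvd_trans (pow_dvd_pow 2 (by omega)) h
  rw [pow_succ, mul_comm ((2:ℤ)^M) 2] at h2
  have h2' : (2 : ℤ) ^ M * (2 * 1) ∣ 2 ^ M * c := by
    rwa [show (2:ℤ)^M * (2*1) = 2 * 2^M by ring]
  have hdc : (2 : ℤ) * 1 ∣ c :=
    (mul_dvd_mul_iff_left (pow_ne_zero M (two_ne_zero))).mp h2'
  obtain ⟨k, hk⟩ := hc
  rw [mul_one] at hdc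
  obtain ⟨w, hw⟩ := hdc
  omega

lemma growth : ∀ t : ℕ, t + 15 < 2 ^ (t + 4)
  | 0 => by norm_num
  | t + 1 => by
      have ih := growth t
      have h2 : (2 : ℕ) ^ (t + 1 + 4) = 2 * 2 ^ (t + 4) := by ring
      omega

/-- Main contradiction lemma for `1 ≤ n < m`. -/
lemma key_lemma (n m : ℕ) (hn : 1 ≤ n) (hnm : n < m)
    (h : a n - 2 ^ n = a m - 2 ^ m) : False := by
  have hm8 : m ≤ 2 * n + 8 := size_bound n m hn hnm h
  by_cases hn7 : n ≤ 6
  · -- finite check: n ≤ 6, m ≤ 20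
    have hm20 : m ≤ 20 := by omega
    interval_cases n <;> interval_cases m <;> revert h <;> decide
  · push_neg at hn7
    -- the 2-adic argument
    obtain ⟨x, hx16, hxd⟩ := hensel n (by omega)
    set d : ℕ := m - n with hd
    have hdpos : d ≠ 0 := by omega
    have hmnd : m = n + d := by omega
    have hEn := eig n x hxd n
    have hEm := eig n x hxd m
    -- 2^n ∣ a m - a n
    have hdiff : a m - a n = 2 ^ m - 2 ^ n := by linarith
    have hdvd_am : (2 : ℤ) ^ n ∣ a m - a n := by
      rw [hdiff, hmnd, pow_add]
      exact ⟨2 ^ d - 1, by ring⟩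
    -- (-3 - x) is divisible by 4
    have h4 : (4 : ℤ) ∣ (-3 - x) := by omega
    obtain ⟨w, hw⟩ := h4
    have hpow_n : (2 : ℤ) ^ n ∣ (-3 - x) ^ n := by
      rw [hw, mul_pow, show (4:ℤ) = 2^2 by norm_num, ← pow_mul]
      exact Dvd.dvd.mul_right (pow_dvd_pow 2 (by omega)) _
    have hpow_m : (2 : ℤ) ^ n ∣ (-3 - x) ^ m := by
      rw [hmnd, pow_add]
      exact hpow_n.mul_right _
    -- combine: 2^n ∣ x^n (x+2) (x^d - 1)
    have hcomb : (2 : ℤ) ^ n ∣ x ^ n * (x + 2) * (x ^ d - 1) := by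
      have h2 : (2 : ℤ) ^ n ∣ (2 * x + 3) * (a m - a n) := hdvd_am.mul_left _
      have h3 : (2 : ℤ) ^ n ∣ (-3 - x) ^ m * (-1 - x) := hpow_m.mul_right _
      have h4' : (2 : ℤ) ^ n ∣ (-3 - x) ^ n * (-1 - x) := hpow_n.mul_right _
      have h5 : (2 : ℤ) ^ n ∣ x ^ m * (x + 2) - x ^ n * (x + 2) := by
        have hT := hEm.sub hEn
        have hcombo := (h2.sub hT).add (h3.sub h4')
        convert hcombo using 1
        · rfl
        ring
      have h6 : x ^ m * (x + 2) - x ^ n * (x + 2) = x ^ n * (x + 2) * (x ^ d - 1) := by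
        rw [hmnd, pow_add]; ring
      rwa [h6] at h5
    -- decompose d = 2^j * d'
    obtain ⟨j, d', hd'odd, hdeq⟩ := Nat.exists_eq_two_pow_mul_odd hdpos
    obtain ⟨c, hcodd, hxd1⟩ := val_pow_sub_one x hx16 j d' hd'odd
    have hxdp : x ^ d - 1 = 2 ^ (3 + j) * c := by
      rw [hdeq, mul_comm (2 ^ j) d', hxd1]; ring
    have hxodd : Odd x := by
      refine ⟨(x - 1) / 2, ?_⟩
      omega
    have hodd_all : Odd (x ^ n * (x + 2) * c) := by
      have h1 : Odd (x ^ n) := hxodd.pow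
      have h2 : Odd (x + 2) := by obtain ⟨k, hk⟩ := hxodd; exact ⟨k + 1, by omega⟩
      exact (h1.mul h2).mul hcodd
    have hfin : (2 : ℤ) ^ n ∣ 2 ^ (3 + j) * (x ^ n * (x + 2) * c) := by
      have : x ^ n * (x + 2) * (x ^ d - 1) = 2 ^ (3 + j) * (x ^ n * (x + 2) * c) := by
        rw [hxdp]; ring
      rwa [this] at hcomb
    have hle : n ≤ 3 + j := pow_dvd_le n (3 + j) _ hodd_all hfin
    -- contradiction with size
    have hjd : 2 ^ j ≤ d := Nat.le_of_dvd (by omega) ⟨d', hdeq⟩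
    have hd_le : d ≤ n + 8 := by omega
    have hgr : n + 8 < 2 ^ (n - 3) := by
      have := growth (n - 7)
      have he : n - 7 + 4 = n - 3 := by omega
      have he2 : n - 7 + 15 = n + 8 := by omega
      rwa [he, he2] at this
    have hpow : 2 ^ (n - 3) ≤ 2 ^ j := Nat.pow_le_pow_right (by norm_num) (by omega)
    omega

theorem no_repeats_a_sub_two_pow (n m : ℕ) (hn : 0 < n) (hm : 0 < m) (hnm : n ≠ m) :
    a n - 2 ^ n ≠ a m - 2 ^ m := by
  intro h
  rcases Nat.lt_or_ge n m with hlt | hge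
  · exact key_lemma n m hn hlt h
  · have hlt : m < n := lt_of_le_of_ne hge (by omega)
    exact key_lemma m n hm hlt h.symm
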